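/- There exist absolute constants c > 0 and C > 0 such that for every α ∈ (0,1), every σ > 0, every x ∈ ℝ and every integer j ≥ 0: c · min{ 1, |x| α^j √(1−α²)/σ + α^{2j} } ≤ d_TV( μ_j , π ) ≤ C · min{ 1, |x| α^j √(1−α²)/σ + α^{2j} }, where μ_j := N( α^j x , σ² (1 − α^{2j})/(1 − α²) ) is the law after j steps of the AR(1) recursion X_k = α X_{k−1} + σ ε_k (with i.i.d. standard Gaussian innovations ε_k) started at X_0 = x, and π := N( 0 , σ²/(1 − α²) ) is its invariant distribution. -/

import Mathlib

open MeasureTheory ProbabilityTheory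

/-- Total variation distance between two measures on `ℝ`. -/
noncomputable def dTV (μ ν : Measure ℝ) : ℝ :=
  ⨆ A : {A : Set ℝ // MeasurableSet A}, |(μ A.1).toReal - (ν A.1).toReal|

open Real Set
open scoped NNReal ENNReal
set_option maxHeartbeats 1000000
set_option linter.deprecated false

section dtv
variable {μ ν : Measure ℝ} [IsProbabilityMeasure μ] [IsProbabilityMeasure ν]

lemma abs_diff_le_one (A : Set ℝ) : |(μ A).toReal - (ν A).toReal| ≤ 1 := by
  rw [abs_le]
  have h1 : (μ A).toReal ≤ 1 := by
    simpa using ENNReal.toReal_mono (by simp) (prob_le_one (μ := μ) (s := A))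
  have h2 : (ν A).toReal ≤ 1 := by
    simpa using ENNReal.toReal_mono (by simp) (prob_le_one (μ := ν) (s := A))
  constructor <;> nlinarith [ENNReal.toReal_nonneg (a := μ A), ENNReal.toReal_nonneg (a := ν A)]

lemma dTV_le {B : ℝ} (h : ∀ A : Set ℝ, MeasurableSet A → |(μ A).toReal - (ν A).toReal| ≤ B) :
    dTV μ ν ≤ B := by
  unfold dTV
  exact ciSup_le (fun A => h A.1 A.2)

lemma le_dTV {A : Set ℝ} (hA : MeasurableSet A) :
    |(μ A).toReal - (ν A).toReal| ≤ dTV μ ν := by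
  have hbdd : BddAbove (Set.range fun A : {A : Set ℝ // MeasurableSet A} =>
      |(μ A.1).toReal - (ν A.1).toReal|) := by
    refine ⟨1, ?_⟩
    rintro x ⟨B, rfl⟩
    exact abs_diff_le_one _
  exact le_ciSup hbdd ⟨A, hA⟩

lemma dTV_le_one : dTV μ ν ≤ 1 := dTV_le (fun A _ => abs_diff_le_one A)

end dtv

section gauss
variable {m : ℝ} {v : ℝ≥0}

lemma gr_toReal (hv : v ≠ 0) (s : Set ℝ) :
    ((gaussianReal m v) s).toReal = ∫ x in s, gaussianPDFReal m v x := by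
  rw [gaussianReal_apply_eq_integral _ hv, ENNReal.toReal_ofReal]
  exact integral_nonneg (fun x => gaussianPDFReal_nonneg _ _ _)

lemma gaussianPDFReal_le_sup (y : ℝ) : gaussianPDFReal m v y ≤ (√(2 * π * v))⁻¹ := by
  rw [gaussianPDFReal]
  have h1 : rexp (-(y-m)^2/(2*(v:ℝ))) ≤ 1 := exp_le_one_iff.mpr (div_nonpos_of_nonpos_of_nonneg (neg_nonpos.mpr (sq_nonneg _)) (by positivity))
  nlinarith [inv_nonneg.mpr (Real.sqrt_nonneg (2*π*(v:ℝ))), exp_pos (-(y-m)^2/(2*(v:ℝ)))]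

lemma meas_Ioc_le (hv : v ≠ 0) {a b : ℝ} (hab : a ≤ b) :
    ((gaussianReal 0 v) (Ioc a b)).toReal ≤ (b - a) * (√(2 * π * v))⁻¹ := by
  rw [gr_toReal hv]
  have h2 : ∫ _x in Ioc a b, (√(2 * π * (v:ℝ)))⁻¹ = (b - a) * (√(2 * π * v))⁻¹ := by
    rw [setIntegral_const, Real.volume_real_Ioc_of_le hab, smul_eq_mul]
  rw [← h2]
  exact setIntegral_mono_on ((integrable_gaussianPDFReal _ _).restrict)
    (integrableOn_const measure_Ioc_lt_top.ne) measurableSet_Ioc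
    (fun x _ => gaussianPDFReal_le_sup x)

lemma meas_Ioc_ge (hv : v ≠ 0) {a b K : ℝ} (hab : a ≤ b)
    (hK : ∀ y ∈ Ioc a b, K ≤ gaussianPDFReal 0 v y) :
    (b - a) * K ≤ ((gaussianReal 0 v) (Ioc a b)).toReal := by
  rw [gr_toReal hv]
  have h2 : ∫ _x in Ioc a b, K = (b - a) * K := by
    rw [setIntegral_const, Real.volume_real_Ioc_of_le hab, smul_eq_mul]
  rw [← h2]
  exact setIntegral_mono_on (integrableOn_const measure_Ioc_lt_top.ne)
    ((integrable_gaussianPDFReal _ _).restrict) measurableSet_Ioc hK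

end gauss

section crossing
variable {f g : ℝ → ℝ}

lemma crossing (hf : Integrable f) (hg : Integrable g)
    {S : Set ℝ} (hS : MeasurableSet S)
    (hin : ∀ y ∈ S, g y ≤ f y) (hout : ∀ y ∉ S, f y ≤ g y)
    {A : Set ℝ} (hA : MeasurableSet A) :
    ∫ y in A, (f y - g y) ≤ ∫ y in S, (f y - g y) := by
  have hfg : Integrable (fun y => f y - g y) := hf.sub hg
  have h1 : ∫ y in A, (f y - g y) =
      (∫ y in A ∩ S, (f y - g y)) + ∫ y in A \ S, (f y - g y) :=
    (integral_inter_add_diff hS hfg.integrableOn).symm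
  have h2 : ∫ y in A \ S, (f y - g y) ≤ 0 :=
    setIntegral_nonpos (hA.diff hS) (fun y hy => sub_nonpos.mpr (hout y hy.2))
  have h3 : ∫ y in A ∩ S, (f y - g y) ≤ ∫ y in S, (f y - g y) := by
    apply setIntegral_mono_set hfg.integrableOn
    · exact (ae_restrict_iff' hS).mpr (Filter.Eventually.of_forall
        fun y hy => sub_nonneg.mpr (hin y hy))
    · exact HasSubset.Subset.eventuallyLE inter_subset_right
  linarith
end crossing

lemma abs_diff_le_crossing {m1 m2 : ℝ} {v w : ℝ≥0} (hv : v ≠ 0) (hw : w ≠ 0)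
    {S : Set ℝ} (hS : MeasurableSet S)
    (hin : ∀ y ∈ S, gaussianPDFReal m2 w y ≤ gaussianPDFReal m1 v y)
    (hout : ∀ y ∉ S, gaussianPDFReal m1 v y ≤ gaussianPDFReal m2 w y)
    {A : Set ℝ} (hA : MeasurableSet A) :
    |(gaussianReal m1 v A).toReal - (gaussianReal m2 w A).toReal|
      ≤ (gaussianReal m1 v S).toReal - (gaussianReal m2 w S).toReal := by
  have hf : Integrable (gaussianPDFReal m1 v) := integrable_gaussianPDFReal _ _
  have hg : Integrable (gaussianPDFReal m2 w) := integrable_gaussianPDFReal _ _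
  have key : ∀ B : Set ℝ, MeasurableSet B →
      (gaussianReal m1 v B).toReal - (gaussianReal m2 w B).toReal
        = ∫ y in B, (gaussianPDFReal m1 v y - gaussianPDFReal m2 w y) := by
    intro B hB
    rw [gr_toReal hv, gr_toReal hw, integral_sub hf.integrableOn hg.integrableOn]
  rw [key A hA, key S hS, abs_le]
  constructor
  · have h1 : ∫ y in A, (gaussianPDFReal m2 w y - gaussianPDFReal m1 v y)
        ≤ ∫ y in Sᶜ, (gaussianPDFReal m2 w y - gaussianPDFReal m1 v y) :=
      crossing hg hf hS.compl (fun y hy => hout y hy) (fun y hy => hin y (not_not.mp hy)) hA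
    have h2 : (∫ y in S, (gaussianPDFReal m2 w y - gaussianPDFReal m1 v y))
        + ∫ y in Sᶜ, (gaussianPDFReal m2 w y - gaussianPDFReal m1 v y)
        = ∫ y, (gaussianPDFReal m2 w y - gaussianPDFReal m1 v y) :=
      integral_add_compl hS (hg.sub hf)
    have h3 : ∫ y, (gaussianPDFReal m2 w y - gaussianPDFReal m1 v y) = 0 := by
      rw [integral_sub hg hf, integral_gaussianPDFReal_eq_one _ hw,
        integral_gaussianPDFReal_eq_one _ hv, sub_self]
    have h4 : ∫ y in A, (gaussianPDFReal m2 w y - gaussianPDFReal m1 v y)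
        = - ∫ y in A, (gaussianPDFReal m1 v y - gaussianPDFReal m2 w y) := by
      rw [← integral_neg]; congr 1; ext y; ring
    have h5 : ∫ y in S, (gaussianPDFReal m2 w y - gaussianPDFReal m1 v y)
        = - ∫ y in S, (gaussianPDFReal m1 v y - gaussianPDFReal m2 w y) := by
      rw [← integral_neg]; congr 1; ext y; ring
    linarith
  · exact crossing hf hg hS hin hout hA

section helpers
variable {v : ℝ≥0} {m : ℝ}

lemma shift_apply {A : Set ℝ} (hA : MeasurableSet A) :
    gaussianReal m v A = gaussianReal 0 v ((fun y => y + m) ⁻¹' A) := by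
  have h := gaussianReal_map_add_const (μ := 0) (v := v) m
  rw [zero_add] at h
  rw [← h, Measure.map_apply (measurable_add_const m) hA]

lemma gaussianReal_neg_apply {A : Set ℝ} (hA : MeasurableSet A) :
    gaussianReal m v A = gaussianReal (-m) v ((fun y => -y) ⁻¹' A) := by
  have h := gaussianReal_map_const_mul (μ := -m) (v := v) (-1)
  have h2 : (NNReal.mk ((-1:ℝ)^2) (sq_nonneg _)) = 1 := by ext; norm_num
  rw [h2, one_mul, show (-1:ℝ) * -m = m by ring] at h
  rw [← h, Measure.map_apply (by fun_prop) hA]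
  congr 1
  ext y; simp [neg_one_mul]

lemma scale_apply {V t : ℝ} (hV : 0 ≤ V) (ht1 : t ≤ 1) {A : Set ℝ} (hA : MeasurableSet A) :
    gaussianReal 0 ((V*(1-t)).toNNReal) A
      = gaussianReal 0 (V.toNNReal) ((fun y => Real.sqrt (1-t) * y) ⁻¹' A) := by
  have h := gaussianReal_map_const_mul (μ := 0) (v := V.toNNReal) (Real.sqrt (1-t))
  have h2 : (NNReal.mk ((Real.sqrt (1-t))^2) (sq_nonneg _) * V.toNNReal : ℝ≥0) = (V*(1-t)).toNNReal := by
    ext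
    rw [NNReal.coe_mul, Real.coe_toNNReal (V*(1-t)) (by nlinarith),
      Real.coe_toNNReal V hV]
    simp only [NNReal.coe_mk]
    rw [Real.sq_sqrt (by linarith)]
    ring
  rw [h2, mul_zero] at h
  rw [← h, Measure.map_apply (by fun_prop) hA]

lemma preimage_add_Ioi (m a : ℝ) : (fun y => y + m) ⁻¹' (Ioi a) = Ioi (a - m) := by
  ext y; simp only [mem_preimage, mem_Ioi]; constructor <;> intro h <;> linarith

lemma preimage_add_Icc (m a b : ℝ) : (fun y => y + m) ⁻¹' (Icc a b) = Icc (a-m) (b-m) := by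
  ext y; simp only [mem_preimage, mem_Icc]; constructor <;> intro h <;> constructor <;> linarith

lemma preimage_mul_Ioi {c : ℝ} (hc : 0 < c) (a : ℝ) :
    (fun y => c*y) ⁻¹' (Ioi a) = Ioi (a/c) := by
  ext y; simp only [mem_preimage, mem_Ioi]; rw [div_lt_iff₀ hc]
  constructor <;> intro h <;> linarith

lemma preimage_mul_Icc {c : ℝ} (hc : 0 < c) (a b : ℝ) :
    (fun y => c*y) ⁻¹' (Icc a b) = Icc (a/c) (b/c) := by
  ext y; simp only [mem_preimage, mem_Icc]; rw [div_le_iff₀ hc, le_div_iff₀ hc]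
  constructor <;> intro h <;> constructor <;> linarith

end helpers

lemma toNNReal_ne_zero {V : ℝ} (hV : 0 < V) : V.toNNReal ≠ 0 := by
  simp only [ne_eq, Real.toNNReal_eq_zero, not_le]
  exact hV

lemma meanstep {V m : ℝ} (hV : 0 < V) (hm : 0 ≤ m) {A : Set ℝ} (hA : MeasurableSet A) :
    |(gaussianReal m V.toNNReal A).toReal - (gaussianReal 0 V.toNNReal A).toReal|
      ≤ m * (Real.sqrt (2*π*V))⁻¹ := by
  have hvne : V.toNNReal ≠ 0 := toNNReal_ne_zero hV
  have hcoe : ((V.toNNReal : ℝ≥0) : ℝ) = V := Real.coe_toNNReal _ hV.le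
  rcases eq_or_lt_of_le hm with hm0 | hm0
  · rw [← hm0, sub_self, abs_zero]
    positivity
  have hin : ∀ y ∈ Ioi (m/2),
      gaussianPDFReal 0 V.toNNReal y ≤ gaussianPDFReal m V.toNNReal y := by
    intro y hy
    simp only [mem_Ioi] at hy
    unfold gaussianPDFReal
    rw [hcoe]
    apply mul_le_mul_of_nonneg_left _ (by positivity)
    apply Real.exp_le_exp.mpr
    rw [div_le_div_iff_of_pos_right (by linarith)]
    nlinarith
  have hout : ∀ y ∉ Ioi (m/2),
      gaussianPDFReal m V.toNNReal y ≤ gaussianPDFReal 0 V.toNNReal y := by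
    intro y hy
    simp only [mem_Ioi, not_lt] at hy
    unfold gaussianPDFReal
    rw [hcoe]
    apply mul_le_mul_of_nonneg_left _ (by positivity)
    apply Real.exp_le_exp.mpr
    rw [div_le_div_iff_of_pos_right (by linarith)]
    nlinarith
  have hcross := abs_diff_le_crossing hvne hvne measurableSet_Ioi hin hout hA
  refine hcross.trans ?_
  -- compute the RHS
  have h1 : gaussianReal m V.toNNReal (Ioi (m/2)) = gaussianReal 0 V.toNNReal (Ioi (-(m/2))) := by
    rw [shift_apply measurableSet_Ioi, preimage_add_Ioi,
      show m/2 - m = -(m/2) by ring]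
  have h2 : gaussianReal 0 V.toNNReal (Ioi (-(m/2)))
      = gaussianReal 0 V.toNNReal (Ioc (-(m/2)) (m/2)) + gaussianReal 0 V.toNNReal (Ioi (m/2)) := by
    rw [← measure_union (Ioc_disjoint_Ioi le_rfl) measurableSet_Ioi,
      Ioc_union_Ioi_eq_Ioi (by linarith)]
  rw [h1, h2, ENNReal.toReal_add (measure_ne_top _ _) (measure_ne_top _ _)]
  have h3 := meas_Ioc_le hvne (show -(m/2) ≤ m/2 by linarith)
  rw [hcoe] at h3
  have h4 : m / 2 - -(m/2) = m := by ring
  rw [h4] at h3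
  linarith

lemma meas_Icc_le {v : ℝ≥0} (hv : v ≠ 0) {a b : ℝ} (hab : a ≤ b) :
    ((gaussianReal 0 v) (Icc a b)).toReal ≤ (b - a) * (√(2 * π * v))⁻¹ := by
  rw [gr_toReal hv]
  have h2 : ∫ _x in Icc a b, (√(2 * π * (v:ℝ)))⁻¹ = (b - a) * (√(2 * π * v))⁻¹ := by
    rw [setIntegral_const, Real.volume_real_Icc_of_le hab, smul_eq_mul]
  rw [← h2]
  exact setIntegral_mono_on ((integrable_gaussianPDFReal _ _).restrict)
    (integrableOn_const measure_Icc_lt_top.ne) measurableSet_Icc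
    (fun x _ => gaussianPDFReal_le_sup x)

lemma varstep0 {V t : ℝ} (hV : 0 < V) (ht0 : 0 < t) (ht : t ≤ 1/2) {A : Set ℝ}
    (hA : MeasurableSet A) :
    |(gaussianReal 0 ((V*(1-t)).toNNReal) A).toReal - (gaussianReal 0 V.toNNReal A).toReal|
      ≤ t := by
  have ht1 : t < 1 := by linarith
  have h1t : (0:ℝ) < 1 - t := by linarith
  have hv1 : (0:ℝ) < V * (1-t) := by positivity
  have hvne : V.toNNReal ≠ 0 := toNNReal_ne_zero hV
  have hv1ne : (V*(1-t)).toNNReal ≠ 0 := toNNReal_ne_zero hv1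
  have hcoe : ((V.toNNReal : ℝ≥0) : ℝ) = V := Real.coe_toNNReal _ hV.le
  have hcoe1 : (((V*(1-t)).toNNReal : ℝ≥0) : ℝ) = V*(1-t) := Real.coe_toNNReal _ hv1.le
  set L : ℝ := -Real.log (1-t) with hLdef
  have hL : 0 < L := by
    rw [hLdef, neg_pos]
    exact Real.log_neg h1t (by linarith)
  set b : ℝ := Real.sqrt (V*(1-t)*L/t) with hbdef
  have hb0 : 0 ≤ b := Real.sqrt_nonneg _
  have hb2 : b^2 = V*(1-t)*L/t := Real.sq_sqrt (by positivity)
  set c : ℝ := Real.sqrt (1-t) with hcdef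
  have hc0 : 0 < c := Real.sqrt_pos.mpr h1t
  have hc2 : c^2 = 1 - t := Real.sq_sqrt h1t.le
  have hcexp : c = Real.exp (-(L/2)) := by
    have h : (1-t) = Real.exp (-(L/2))^2 := by
      rw [sq, ← Real.exp_add, show -(L/2) + -(L/2) = -L by ring, hLdef, neg_neg,
        Real.exp_log h1t]
    rw [hcdef, h, Real.sqrt_sq (Real.exp_pos _).le]
  have hcinv : c⁻¹ = Real.exp (L/2) := by
    rw [hcexp, ← Real.exp_neg, neg_neg]
  -- pointwise comparison
  have hpdf1 : ∀ y : ℝ, gaussianPDFReal 0 ((V*(1-t)).toNNReal) y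
      = (√(2*π*V))⁻¹ * Real.exp (L/2) * Real.exp (-y^2/(2*(V*(1-t)))) := by
    intro y
    unfold gaussianPDFReal
    rw [hcoe1, sub_zero, show 2*π*(V*(1-t)) = (2*π*V)*(1-t) by ring,
      Real.sqrt_mul (by positivity), mul_inv, ← hcdef, hcinv]
  have hpdf2 : ∀ y : ℝ, gaussianPDFReal 0 V.toNNReal y
      = (√(2*π*V))⁻¹ * Real.exp (-y^2/(2*V)) := by
    intro y
    unfold gaussianPDFReal
    rw [hcoe, sub_zero]
  have hin : ∀ y ∈ Icc (-b) b,
      gaussianPDFReal 0 V.toNNReal y ≤ gaussianPDFReal 0 ((V*(1-t)).toNNReal) y := by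
    intro y hy
    have hy2 : y^2 ≤ b^2 := sq_le_sq' hy.1 hy.2
    have key : y^2 * t ≤ V*(1-t)*L := by
      have := mul_le_mul_of_nonneg_right hy2 ht0.le
      rw [hb2, div_mul_cancel₀ _ ht0.ne'] at this
      exact this
    rw [hpdf1, hpdf2, mul_assoc ((√(2*π*V))⁻¹), ← Real.exp_add]
    apply mul_le_mul_of_nonneg_left _ (by positivity)
    apply Real.exp_le_exp.mpr
    have heq : L/2 + -y^2/(2*(V*(1-t))) - (-y^2/(2*V)) = (V*(1-t)*L - y^2*t)/(2*V*(1-t)) := by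
      field_simp
      ring
    have h5 : 0 ≤ (V*(1-t)*L - y^2*t)/(2*V*(1-t)) := div_nonneg (by linarith) (by positivity)
    linarith
  have hout : ∀ y ∉ Icc (-b) b,
      gaussianPDFReal 0 ((V*(1-t)).toNNReal) y ≤ gaussianPDFReal 0 V.toNNReal y := by
    intro y hy
    simp only [mem_Icc, not_and_or, not_le] at hy
    have hy2 : b^2 ≤ y^2 := by
      rcases hy with h | h
      · nlinarith
      · nlinarith
    have key : V*(1-t)*L ≤ y^2 * t := by
      have := mul_le_mul_of_nonneg_right hy2 ht0.le
      rw [hb2, div_mul_cancel₀ _ ht0.ne'] at this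
      exact this
    rw [hpdf1, hpdf2, mul_assoc ((√(2*π*V))⁻¹), ← Real.exp_add]
    apply mul_le_mul_of_nonneg_left _ (by positivity)
    apply Real.exp_le_exp.mpr
    have heq : -y^2/(2*V) - (L/2 + -y^2/(2*(V*(1-t)))) = (y^2*t - V*(1-t)*L)/(2*V*(1-t)) := by
      field_simp
      ring
    have h5 : 0 ≤ (y^2*t - V*(1-t)*L)/(2*V*(1-t)) := div_nonneg (by linarith) (by positivity)
    linarith
  have hcross := abs_diff_le_crossing hv1ne hvne measurableSet_Icc hin hout hA
  refine hcross.trans ?_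
  -- compute measures
  have h1 : gaussianReal 0 ((V*(1-t)).toNNReal) (Icc (-b) b)
      = gaussianReal 0 V.toNNReal (Icc (-b/c) (b/c)) := by
    rw [scale_apply hV.le ht1.le measurableSet_Icc, ← hcdef, preimage_mul_Icc hc0,
      neg_div]
  -- covering
  have hcover : Icc (-b/c) (b/c) ⊆ (Icc (-b/c) (-b)) ∪ (Icc (-b) b ∪ Icc b (b/c)) := by
    intro y hy
    simp only [mem_Icc, mem_union] at hy ⊢
    rcases le_or_gt y (-b) with h | h
    · exact Or.inl ⟨hy.1, h⟩
    rcases le_or_gt y b with h2 | h2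
    · exact Or.inr (Or.inl ⟨h.le, h2⟩)
    · exact Or.inr (Or.inr ⟨h2.le, hy.2⟩)
  have hmono := measure_mono (μ := gaussianReal 0 V.toNNReal) hcover
  have hunle := (hmono.trans ((measure_union_le _ _).trans
    (add_le_add le_rfl (measure_union_le _ _))))
  have htr : (gaussianReal 0 V.toNNReal (Icc (-b/c) (b/c))).toReal
      ≤ (gaussianReal 0 V.toNNReal (Icc (-b/c) (-b))).toReal
        + ((gaussianReal 0 V.toNNReal (Icc (-b) b)).toReal
          + (gaussianReal 0 V.toNNReal (Icc b (b/c))).toReal) := by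
    have hfin : gaussianReal 0 V.toNNReal (Icc (-b/c) (-b))
        + (gaussianReal 0 V.toNNReal (Icc (-b) b) + gaussianReal 0 V.toNNReal (Icc b (b/c)))
        ≠ ⊤ := by
      exact ENNReal.add_ne_top.mpr ⟨measure_ne_top _ _,
        ENNReal.add_ne_top.mpr ⟨measure_ne_top _ _, measure_ne_top _ _⟩⟩
    have := ENNReal.toReal_mono hfin hunle
    rwa [ENNReal.toReal_add (measure_ne_top _ _)
      (ENNReal.add_ne_top.mpr ⟨measure_ne_top _ _, measure_ne_top _ _⟩),
      ENNReal.toReal_add (measure_ne_top _ _) (measure_ne_top _ _)] at this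
  -- side interval bounds
  have hbb : b ≤ b/c := by
    rw [le_div_iff₀ hc0]
    nlinarith
  have hside1 := meas_Icc_le hvne (show -b/c ≤ -b by rw [div_le_iff₀ hc0]; nlinarith)
  have hside2 := meas_Icc_le hvne hbb
  rw [hcoe] at hside1 hside2
  -- quantitative bounds
  have hbV : b ≤ Real.sqrt V := by
    have hLle : L ≤ t/(1-t) := by
      have h := Real.log_le_sub_one_of_pos (show (0:ℝ) < (1-t)⁻¹ by positivity)
      rw [Real.log_inv] at h
      rw [hLdef]
      calc -Real.log (1-t) ≤ (1-t)⁻¹ - 1 := h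
        _ = t/(1-t) := by field_simp; ring
    apply Real.sqrt_le_sqrt
    rw [div_le_iff₀ ht0]
    have h7 : (1-t) * L ≤ t := by
      have := mul_le_mul_of_nonneg_left hLle h1t.le
      rwa [mul_div_cancel₀ _ h1t.ne'] at this
    nlinarith
  have hcinvle : c⁻¹ ≤ 1 + t := by
    have hcge : (1+t)⁻¹ ≤ c := by
      rw [hcdef]
      rw [Real.le_sqrt (by positivity) h1t.le]
      rw [inv_pow, inv_eq_one_div, div_le_iff₀ (by positivity)]
      nlinarith [ht0, ht, mul_pos ht0 ht0, mul_nonneg (mul_nonneg ht0.le ht0.le) ht0.le]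
    rw [inv_eq_one_div, div_le_iff₀ hc0]
    calc (1:ℝ) = (1+t) * (1+t)⁻¹ := by field_simp
      _ ≤ (1+t) * c := by
          apply mul_le_mul_of_nonneg_left hcge (by linarith)
  have hgap : b/c - b ≤ Real.sqrt V * t := by
    have heq9 : b/c - b = b * (c⁻¹ - 1) := by
      rw [div_eq_mul_inv]; ring
    rw [heq9]
    have h8 : c⁻¹ - 1 ≤ t := by linarith
    have h9 : 0 ≤ c⁻¹ - 1 := by
      have hcle : c ≤ 1 := by rw [hcdef]; exact Real.sqrt_le_one.mpr (by linarith)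
      nlinarith [mul_inv_cancel₀ hc0.ne', inv_nonneg.mpr hc0.le]
    calc b * (c⁻¹ - 1) ≤ Real.sqrt V * (c⁻¹ - 1) := mul_le_mul_of_nonneg_right hbV h9
      _ ≤ Real.sqrt V * t := mul_le_mul_of_nonneg_left h8 (Real.sqrt_nonneg _)
  -- final numeric assembly
  have hsv : 0 < Real.sqrt V := Real.sqrt_pos.mpr hV
  have hsqrt : Real.sqrt (2*π*V) = Real.sqrt (2*π) * Real.sqrt V := by
    rw [← Real.sqrt_mul (by positivity) V]
  have h2pi : 2 ≤ Real.sqrt (2*π) :=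
    (Real.le_sqrt (by norm_num) (by positivity)).mpr (by nlinarith [Real.pi_gt_three])
  have hspi : 0 < Real.sqrt (2*π) := by linarith
  have hgap0 : -b - (-b/c) = b/c - b := by ring
  rw [hgap0] at hside1
  have hKnn : (0:ℝ) ≤ (√(2*π*V))⁻¹ := by positivity
  have hstep : (b/c - b) * (√(2*π*V))⁻¹ ≤ t/2 := by
    calc (b/c - b) * (√(2*π*V))⁻¹ ≤ (Real.sqrt V * t) * (√(2*π*V))⁻¹ :=
          mul_le_mul_of_nonneg_right hgap hKnn
      _ = t * (Real.sqrt (2*π))⁻¹ := by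
          rw [hsqrt, mul_inv, show Real.sqrt V * t * ((Real.sqrt (2*π))⁻¹ * (Real.sqrt V)⁻¹)
            = (Real.sqrt V * (Real.sqrt V)⁻¹) * (t * (Real.sqrt (2*π))⁻¹) by ring,
            mul_inv_cancel₀ hsv.ne', one_mul]
      _ ≤ t/2 := by
          rw [div_eq_mul_inv t 2]
          apply mul_le_mul_of_nonneg_left _ ht0.le
          nlinarith [mul_nonneg (sub_nonneg.mpr h2pi) (inv_nonneg.mpr hspi.le),
            mul_inv_cancel₀ hspi.ne']
  rw [h1]
  have hgap1 : 0 ≤ b/c - b := by linarith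
  linarith [htr, hside1, hside2]

lemma varstep {V t m : ℝ} (hV : 0 < V) (ht0 : 0 < t) (ht : t ≤ 1/2) {A : Set ℝ}
    (hA : MeasurableSet A) :
    |(gaussianReal m ((V*(1-t)).toNNReal) A).toReal - (gaussianReal m V.toNNReal A).toReal|
      ≤ t := by
  rw [shift_apply hA, shift_apply hA]
  exact varstep0 hV ht0 ht ((measurable_add_const m) hA)

lemma meanstep_abs {V m : ℝ} (hV : 0 < V) {A : Set ℝ} (hA : MeasurableSet A) :
    |(gaussianReal m V.toNNReal A).toReal - (gaussianReal 0 V.toNNReal A).toReal|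
      ≤ |m| * (Real.sqrt (2*π*V))⁻¹ := by
  rcases le_or_gt 0 m with h | h
  · rw [abs_of_nonneg h]
    exact meanstep hV h hA
  · have h0 : gaussianReal 0 V.toNNReal A
        = gaussianReal 0 V.toNNReal ((fun y => -y) ⁻¹' A) := by
      rw [gaussianReal_neg_apply (m := (0:ℝ)) hA, neg_zero]
    rw [gaussianReal_neg_apply (m := m) hA, h0, abs_of_neg h]
    exact meanstep hV (by linarith) (measurable_neg hA)

lemma dTV_gauss_neg (m : ℝ) (v w : ℝ≥0) :
    dTV (gaussianReal m v) (gaussianReal 0 w) = dTV (gaussianReal (-m) v) (gaussianReal 0 w) := by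
  have key : ∀ (m' : ℝ), dTV (gaussianReal m' v) (gaussianReal 0 w)
      ≤ dTV (gaussianReal (-m') v) (gaussianReal 0 w) := by
    intro m'
    apply dTV_le
    intro A hA
    have h0 : gaussianReal 0 w A = gaussianReal 0 w ((fun y => -y) ⁻¹' A) := by
      rw [gaussianReal_neg_apply (m := (0:ℝ)) hA, neg_zero]
    rw [gaussianReal_neg_apply (m := m') hA, h0]
    exact le_dTV (measurable_neg hA)
  refine le_antisymm (key m) ?_
  have h2 := key (-m)
  rwa [neg_neg] at h2

lemma upper_master {V t m : ℝ} (hV : 0 < V) (ht0 : 0 < t) (ht1 : t ≤ 1) :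
    dTV (gaussianReal m ((V*(1-t)).toNNReal)) (gaussianReal 0 V.toNNReal)
      ≤ 2 * min 1 (|m|/Real.sqrt V + t) := by
  have hsv : 0 < Real.sqrt V := Real.sqrt_pos.mpr hV
  have hδ0 : 0 ≤ |m|/Real.sqrt V := by positivity
  have hmin0 : 0 < min 1 (|m|/Real.sqrt V + t) := lt_min (by norm_num) (by linarith)
  rcases le_or_gt t (1/2) with hc | hc
  · have hD : dTV (gaussianReal m ((V*(1-t)).toNNReal)) (gaussianReal 0 V.toNNReal)
        ≤ |m|/Real.sqrt V + t := by
      apply dTV_le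
      intro A hA
      have h1 := varstep (m := m) hV ht0 hc hA
      have h2 := meanstep_abs (m := m) hV hA
      have h3 : |m| * (Real.sqrt (2*π*V))⁻¹ ≤ |m|/Real.sqrt V := by
        rw [div_eq_mul_inv]
        apply mul_le_mul_of_nonneg_left _ (abs_nonneg m)
        apply inv_anti₀ hsv
        apply Real.sqrt_le_sqrt
        nlinarith [Real.pi_gt_three]
      calc |((gaussianReal m ((V*(1-t)).toNNReal)) A).toReal
            - ((gaussianReal 0 V.toNNReal) A).toReal|
          ≤ |((gaussianReal m ((V*(1-t)).toNNReal)) A).toReal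
              - ((gaussianReal m V.toNNReal) A).toReal|
            + |((gaussianReal m V.toNNReal) A).toReal
              - ((gaussianReal 0 V.toNNReal) A).toReal| := abs_sub_le _ _ _
        _ ≤ t + |m|/Real.sqrt V := by linarith
        _ = |m|/Real.sqrt V + t := by ring
    rcases le_or_gt (|m|/Real.sqrt V + t) 1 with h4 | h4
    · rw [min_eq_right h4]
      linarith
    · rw [min_eq_left h4.le]
      linarith [dTV_le_one (μ := gaussianReal m ((V*(1-t)).toNNReal))
        (ν := gaussianReal 0 V.toNNReal)]
  · have h5 : (1:ℝ)/2 ≤ min 1 (|m|/Real.sqrt V + t) := le_min (by norm_num) (by linarith)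
    linarith [dTV_le_one (μ := gaussianReal m ((V*(1-t)).toNNReal))
      (ν := gaussianReal 0 V.toNNReal)]

lemma dTV_nonneg {μ ν : Measure ℝ} [IsProbabilityMeasure μ] [IsProbabilityMeasure ν] :
    0 ≤ dTV μ ν := by
  have h := le_dTV (μ := μ) (ν := ν) MeasurableSet.empty
  exact le_trans (abs_nonneg _) h

lemma lower_mean {V t m : ℝ} (hV : 0 < V) (ht0 : 0 < t) (ht1 : t < 1) (hm : 0 ≤ m) :
    min 1 (m/Real.sqrt V) * (Real.exp (-(1/2)) * (Real.sqrt (2*π))⁻¹)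
      ≤ dTV (gaussianReal m ((V*(1-t)).toNNReal)) (gaussianReal 0 V.toNNReal) := by
  have hsv : 0 < Real.sqrt V := Real.sqrt_pos.mpr hV
  rcases eq_or_lt_of_le hm with hm0 | hm0
  · rw [← hm0]
    simp only [zero_div]
    rw [min_eq_right (by norm_num : (0:ℝ) ≤ 1), zero_mul]
    exact dTV_nonneg
  have h1t : (0:ℝ) < 1 - t := by linarith
  have hvne : V.toNNReal ≠ 0 := toNNReal_ne_zero hV
  have hcoe : ((V.toNNReal : ℝ≥0) : ℝ) = V := Real.coe_toNNReal _ hV.le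
  set c : ℝ := Real.sqrt (1-t) with hcdef
  have hc0 : 0 < c := Real.sqrt_pos.mpr h1t
  have hc1 : c ≤ 1 := Real.sqrt_le_one.mpr (by linarith)
  set u : ℝ := m / c with hudef
  have hu0 : 0 < u := by positivity
  have hum : m ≤ u := by
    rw [hudef, le_div_iff₀ hc0]
    nlinarith
  set w : ℝ := min m (Real.sqrt V) with hwdef
  have hw0 : 0 < w := lt_min hm0 hsv
  have hwu : w ≤ u := le_trans (min_le_left _ _) hum
  -- μ (Ioi 0) = ν (Ioi (-u))
  have h1 : gaussianReal m ((V*(1-t)).toNNReal) (Ioi 0)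
      = gaussianReal 0 V.toNNReal (Ioi (-u)) := by
    rw [shift_apply measurableSet_Ioi, preimage_add_Ioi,
      scale_apply hV.le ht1.le measurableSet_Ioi, ← hcdef, preimage_mul_Ioi hc0]
    congr 1
    rw [hudef]
    ring_nf
  have h2 : gaussianReal 0 V.toNNReal (Ioi (-u))
      = gaussianReal 0 V.toNNReal (Ioc (-u) 0) + gaussianReal 0 V.toNNReal (Ioi 0) := by
    rw [← measure_union (Ioc_disjoint_Ioi le_rfl) measurableSet_Ioi,
      Ioc_union_Ioi_eq_Ioi (by linarith)]
  have h3 : gaussianReal 0 V.toNNReal (Ioc (-w) 0) ≤ gaussianReal 0 V.toNNReal (Ioc (-u) 0) :=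
    measure_mono (Ioc_subset_Ioc (by linarith) le_rfl)
  have h4 : w * ((Real.sqrt (2*π*V))⁻¹ * Real.exp (-(1/2)))
      ≤ (gaussianReal 0 V.toNNReal (Ioc (-w) 0)).toReal := by
    have h5 := meas_Ioc_ge hvne (show -w ≤ 0 by linarith)
      (K := (Real.sqrt (2*π*V))⁻¹ * Real.exp (-(1/2))) ?_
    · rw [show (0:ℝ) - (-w) = w by ring] at h5
      exact h5
    · intro y hy
      unfold gaussianPDFReal
      rw [hcoe, sub_zero]
      apply mul_le_mul_of_nonneg_left _ (by positivity)
      apply Real.exp_le_exp.mpr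
      have hyw : y^2 ≤ V := by
        have hww : w ≤ Real.sqrt V := min_le_right _ _
        have : y^2 ≤ w^2 := sq_le_sq' hy.1.le (by linarith [hy.2])
        nlinarith [Real.sq_sqrt hV.le]
      rw [neg_div]
      have h6 : y^2/(2*V) ≤ 1/2 := by
        rw [div_le_iff₀ (by positivity)]
        nlinarith
      linarith
  have hsplit : Real.sqrt (2*π*V) = Real.sqrt (2*π) * Real.sqrt V := by
    rw [← Real.sqrt_mul (by positivity) V]
  have hKeq : w * ((Real.sqrt (2*π*V))⁻¹ * Real.exp (-(1/2)))
      = (w / Real.sqrt V) * (Real.exp (-(1/2)) * (Real.sqrt (2*π))⁻¹) := by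
    rw [hsplit, mul_inv, div_eq_mul_inv]
    ring
  have hminle : min 1 (m/Real.sqrt V) ≤ w / Real.sqrt V := by
    rcases le_total m (Real.sqrt V) with h | h
    · rw [hwdef, min_eq_left h]
      exact min_le_right _ _
    · rw [hwdef, min_eq_right h, div_self hsv.ne']
      exact min_le_left _ _
  have habs := le_dTV (μ := gaussianReal m ((V*(1-t)).toNNReal))
    (ν := gaussianReal 0 V.toNNReal) (A := Ioi 0) measurableSet_Ioi
  have hdiff : (gaussianReal m ((V*(1-t)).toNNReal) (Ioi 0)).toReal
      - (gaussianReal 0 V.toNNReal (Ioi 0)).toReal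
      = (gaussianReal 0 V.toNNReal (Ioc (-u) 0)).toReal := by
    rw [h1, h2, ENNReal.toReal_add (measure_ne_top _ _) (measure_ne_top _ _)]
    ring
  have h3' : (gaussianReal 0 V.toNNReal (Ioc (-w) 0)).toReal
      ≤ (gaussianReal 0 V.toNNReal (Ioc (-u) 0)).toReal :=
    ENNReal.toReal_mono (measure_ne_top _ _) h3
  have hfin : min 1 (m/Real.sqrt V) * (Real.exp (-(1/2)) * (Real.sqrt (2*π))⁻¹)
      ≤ (gaussianReal m ((V*(1-t)).toNNReal) (Ioi 0)).toReal
        - (gaussianReal 0 V.toNNReal (Ioi 0)).toReal := by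
    rw [hdiff]
    calc min 1 (m/Real.sqrt V) * (Real.exp (-(1/2)) * (Real.sqrt (2*π))⁻¹)
        ≤ (w / Real.sqrt V) * (Real.exp (-(1/2)) * (Real.sqrt (2*π))⁻¹) :=
          mul_le_mul_of_nonneg_right hminle (by positivity)
      _ = w * ((Real.sqrt (2*π*V))⁻¹ * Real.exp (-(1/2))) := hKeq.symm
      _ ≤ (gaussianReal 0 V.toNNReal (Ioc (-w) 0)).toReal := h4
      _ ≤ (gaussianReal 0 V.toNNReal (Ioc (-u) 0)).toReal := h3'
  exact hfin.trans ((le_abs_self _).trans habs)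

lemma lower_var {V t m : ℝ} (hV : 0 < V) (ht0 : 0 < t) (ht1 : t < 1) (hm : 0 ≤ m)
    (hdt : m/Real.sqrt V ≤ t) :
    t * (Real.exp (-(25/2)) * (Real.sqrt (2*π))⁻¹)
      ≤ dTV (gaussianReal m ((V*(1-t)).toNNReal)) (gaussianReal 0 V.toNNReal) := by
  have hsv : 0 < Real.sqrt V := Real.sqrt_pos.mpr hV
  have h1t : (0:ℝ) < 1 - t := by linarith
  have hvne : V.toNNReal ≠ 0 := toNNReal_ne_zero hV
  have hcoe : ((V.toNNReal : ℝ≥0) : ℝ) = V := Real.coe_toNNReal _ hV.le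
  set c : ℝ := Real.sqrt (1-t) with hcdef
  have hc0 : 0 < c := Real.sqrt_pos.mpr h1t
  have hc1 : c ≤ 1 := Real.sqrt_le_one.mpr (by linarith)
  have hm' : m ≤ t * Real.sqrt V := by
    rw [div_le_iff₀ hsv] at hdt
    linarith
  set R : ℝ := 4 * Real.sqrt V with hRdef
  set R' : ℝ := (4+t) * Real.sqrt V with hR'def
  have hRR' : R ≤ R' := by
    rw [hRdef, hR'def]
    nlinarith
  -- μ (Icc (-R) R) as ν of an interval
  have h1 : gaussianReal m ((V*(1-t)).toNNReal) (Icc (-R) R)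
      = gaussianReal 0 V.toNNReal (Icc ((-R-m)/c) ((R-m)/c)) := by
    rw [shift_apply measurableSet_Icc, preimage_add_Icc,
      scale_apply hV.le ht1.le measurableSet_Icc, ← hcdef, preimage_mul_Icc hc0]
  have hcb : c ≤ (4-t)/(4+t) := by
    have hss : (1-t) ≤ ((4-t)/(4+t))^2 := by
      rw [div_pow, le_div_iff₀ (by positivity)]
      nlinarith [mul_pos ht0 ht0, mul_nonneg (mul_nonneg ht0.le ht0.le) ht0.le]
    calc c ≤ Real.sqrt (((4-t)/(4+t))^2) := Real.sqrt_le_sqrt hss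
      _ = (4-t)/(4+t) := Real.sqrt_sq (div_nonneg (by linarith) (by linarith))
  have ha' : (-R-m)/c ≤ -R := by
    rw [div_le_iff₀ hc0]
    nlinarith
  have hb' : R' ≤ (R-m)/c := by
    rw [le_div_iff₀ hc0]
    have h8 : (4+t)*Real.sqrt V*c ≤ (4+t)*Real.sqrt V*((4-t)/(4+t)) :=
      mul_le_mul_of_nonneg_left hcb (by positivity)
    have h9 : (4+t)*Real.sqrt V*((4-t)/(4+t)) = (4-t)*Real.sqrt V := by
      field_simp
    rw [hR'def, hRdef]
    nlinarith
  have hsub : Icc (-R) R' ⊆ Icc ((-R-m)/c) ((R-m)/c) := Icc_subset_Icc ha' hb'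
  have h2 : gaussianReal 0 V.toNNReal (Icc (-R) R')
      = gaussianReal 0 V.toNNReal (Icc (-R) R) + gaussianReal 0 V.toNNReal (Ioc R R') := by
    rw [← measure_union ?hdisj measurableSet_Ioc, Icc_union_Ioc_eq_Icc (by nlinarith) hRR']
    case hdisj =>
      rw [Set.disjoint_left]
      rintro y hy1 hy2
      exact absurd hy1.2 (not_le.mpr hy2.1)
  have h3 : (gaussianReal 0 V.toNNReal (Icc (-R) R')).toReal
      ≤ (gaussianReal m ((V*(1-t)).toNNReal) (Icc (-R) R)).toReal := by
    rw [h1]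
    exact ENNReal.toReal_mono (measure_ne_top _ _) (measure_mono hsub)
  have h4 : (R' - R) * ((Real.sqrt (2*π*V))⁻¹ * Real.exp (-(25/2)))
      ≤ (gaussianReal 0 V.toNNReal (Ioc R R')).toReal := by
    apply meas_Ioc_ge hvne hRR'
    intro y hy
    unfold gaussianPDFReal
    rw [hcoe, sub_zero]
    apply mul_le_mul_of_nonneg_left _ (by positivity)
    apply Real.exp_le_exp.mpr
    have hy2 : y^2 ≤ 25 * V := by
      have hy1 : 0 < y := lt_of_le_of_lt (by positivity) hy.1
      have hy5 : y ≤ 5 * Real.sqrt V := by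
        have := hy.2
        rw [hR'def] at this
        nlinarith
      nlinarith [Real.sq_sqrt hV.le]
    rw [neg_div]
    have h6 : y^2/(2*V) ≤ 25/2 := by
      rw [div_le_iff₀ (by positivity)]
      nlinarith
    linarith
  have hsplit : Real.sqrt (2*π*V) = Real.sqrt (2*π) * Real.sqrt V := by
    rw [← Real.sqrt_mul (by positivity) V]
  have hKeq : (R' - R) * ((Real.sqrt (2*π*V))⁻¹ * Real.exp (-(25/2)))
      = t * (Real.exp (-(25/2)) * (Real.sqrt (2*π))⁻¹) * (Real.sqrt V * (Real.sqrt V)⁻¹) := by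
    rw [hR'def, hRdef, hsplit, mul_inv]
    ring
  have habs := le_dTV (μ := gaussianReal m ((V*(1-t)).toNNReal))
    (ν := gaussianReal 0 V.toNNReal) (A := Icc (-R) R) measurableSet_Icc
  have hdiff : (gaussianReal 0 V.toNNReal (Ioc R R')).toReal
      ≤ (gaussianReal m ((V*(1-t)).toNNReal) (Icc (-R) R)).toReal
        - (gaussianReal 0 V.toNNReal (Icc (-R) R)).toReal := by
    have h2' : (gaussianReal 0 V.toNNReal (Icc (-R) R')).toReal
        = (gaussianReal 0 V.toNNReal (Icc (-R) R)).toReal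
          + (gaussianReal 0 V.toNNReal (Ioc R R')).toReal := by
      rw [h2, ENNReal.toReal_add (measure_ne_top _ _) (measure_ne_top _ _)]
    linarith
  have hfin : t * (Real.exp (-(25/2)) * (Real.sqrt (2*π))⁻¹)
      ≤ (gaussianReal m ((V*(1-t)).toNNReal) (Icc (-R) R)).toReal
        - (gaussianReal 0 V.toNNReal (Icc (-R) R)).toReal := by
    rw [mul_inv_cancel₀ hsv.ne', mul_one] at hKeq
    linarith [h4]
  exact hfin.trans ((le_abs_self _).trans habs)

lemma lower_master {V t m : ℝ} (hV : 0 < V) (ht0 : 0 < t) (ht1 : t < 1) (hm : 0 ≤ m) :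
    Real.exp (-(25/2)) * (Real.sqrt (2*π))⁻¹ / 2 * min 1 (m/Real.sqrt V + t)
      ≤ dTV (gaussianReal m ((V*(1-t)).toNNReal)) (gaussianReal 0 V.toNNReal) := by
  have hsv : 0 < Real.sqrt V := Real.sqrt_pos.mpr hV
  have hδ : 0 ≤ m/Real.sqrt V := by positivity
  have hE21 : Real.exp (-(25/2)) * (Real.sqrt (2*π))⁻¹
      ≤ Real.exp (-(1/2)) * (Real.sqrt (2*π))⁻¹ :=
    mul_le_mul_of_nonneg_right (Real.exp_le_exp.mpr (by norm_num)) (by positivity)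
  have hmin0 : (0:ℝ) ≤ min 1 (m/Real.sqrt V) := le_min (by norm_num) hδ
  rcases le_or_gt t (m/Real.sqrt V) with h | h
  · have hlm := lower_mean hV ht0 ht1 hm
    have hmm : min 1 (m/Real.sqrt V + t) ≤ 2 * min 1 (m/Real.sqrt V) := by
      rcases le_total 1 (m/Real.sqrt V) with h1 | h1
      · rw [min_eq_left h1]
        have := min_le_left 1 (m/Real.sqrt V + t)
        linarith
      · rw [min_eq_right h1]
        have := min_le_right 1 (m/Real.sqrt V + t)
        linarith
    calc Real.exp (-(25/2)) * (Real.sqrt (2*π))⁻¹ / 2 * min 1 (m/Real.sqrt V + t)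
        ≤ Real.exp (-(25/2)) * (Real.sqrt (2*π))⁻¹ / 2 * (2 * min 1 (m/Real.sqrt V)) :=
          mul_le_mul_of_nonneg_left hmm (by positivity)
      _ = min 1 (m/Real.sqrt V) * (Real.exp (-(25/2)) * (Real.sqrt (2*π))⁻¹) := by ring
      _ ≤ min 1 (m/Real.sqrt V) * (Real.exp (-(1/2)) * (Real.sqrt (2*π))⁻¹) :=
          mul_le_mul_of_nonneg_left hE21 hmin0
      _ ≤ _ := hlm
  · have hlv := lower_var hV ht0 ht1 hm h.le
    have hmm : min 1 (m/Real.sqrt V + t) ≤ 2 * t := by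
      have := min_le_right 1 (m/Real.sqrt V + t)
      linarith
    calc Real.exp (-(25/2)) * (Real.sqrt (2*π))⁻¹ / 2 * min 1 (m/Real.sqrt V + t)
        ≤ Real.exp (-(25/2)) * (Real.sqrt (2*π))⁻¹ / 2 * (2 * t) :=
          mul_le_mul_of_nonneg_left hmm (by positivity)
      _ = t * (Real.exp (-(25/2)) * (Real.sqrt (2*π))⁻¹) := by ring
      _ ≤ _ := hlv

/-- Two-sided total variation bound for the AR(1) semigroup: with
`μ_j = N(α^j x, σ²(1−α^{2j})/(1−α²))` the law after `j` steps started at `x` and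
`π = N(0, σ²/(1−α²))` the invariant law,
`c·min{1, |x|α^j √(1−α²)/σ + α^{2j}} ≤ d_TV(μ_j, π) ≤ C·min{1, |x|α^j √(1−α²)/σ + α^{2j}}`
with absolute constants `c, C > 0`. -/
theorem stmt_17 :
    ∃ c > (0:ℝ), ∃ C > (0:ℝ), ∀ (α σ x : ℝ), α ∈ Set.Ioo (0:ℝ) 1 → 0 < σ → ∀ j : ℕ,
      c * min 1 (|x| * α ^ j * Real.sqrt (1 - α ^ 2) / σ + α ^ (2 * j))
          ≤ dTV (gaussianReal (α ^ j * x)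
                  (Real.toNNReal (σ ^ 2 * (1 - α ^ (2 * j)) / (1 - α ^ 2))))
                (gaussianReal 0 (Real.toNNReal (σ ^ 2 / (1 - α ^ 2)))) ∧
      dTV (gaussianReal (α ^ j * x)
              (Real.toNNReal (σ ^ 2 * (1 - α ^ (2 * j)) / (1 - α ^ 2))))
            (gaussianReal 0 (Real.toNNReal (σ ^ 2 / (1 - α ^ 2))))
          ≤ C * min 1 (|x| * α ^ j * Real.sqrt (1 - α ^ 2) / σ + α ^ (2 * j)) := by
  refine ⟨Real.exp (-(25/2)) * (Real.sqrt (2*π))⁻¹ / 2, by positivity, 2, by norm_num, ?_⟩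
  intro α σ x hα hσ j
  obtain ⟨hα0, hα1⟩ := hα
  have h1a : (0:ℝ) < 1 - α^2 := by nlinarith
  have hV : (0:ℝ) < σ^2/(1-α^2) := by positivity
  have hsqpi : (1:ℝ) ≤ Real.sqrt (2*π) := by
    rw [show (1:ℝ) = Real.sqrt 1 by simp]
    exact Real.sqrt_le_sqrt (by nlinarith [Real.pi_gt_three])
  have hcle : Real.exp (-(25/2)) * (Real.sqrt (2*π))⁻¹ / 2 ≤ 1 := by
    have he : Real.exp (-(25/2)) ≤ 1 := Real.exp_le_one_iff.mpr (by norm_num)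
    have hi : (Real.sqrt (2*π))⁻¹ ≤ 1 := by
      rw [inv_le_one_iff₀]
      right; exact hsqpi
    nlinarith [Real.exp_pos (-(25/2:ℝ)), inv_nonneg.mpr (Real.sqrt_nonneg (2*π))]
  rcases Nat.eq_zero_or_pos j with hj | hj
  · -- j = 0 : Dirac case
    subst hj
    simp only [pow_zero, one_mul, mul_one, Nat.mul_zero, sub_self, mul_zero, zero_div,
      Real.toNNReal_zero]
    have hminarg : (1:ℝ) ≤ |x| * Real.sqrt (1 - α^2) / σ + 1 := by
      have h0 : (0:ℝ) ≤ |x| * Real.sqrt (1 - α^2) / σ := by positivity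
      linarith
    rw [min_eq_left hminarg]
    have hvne : (σ^2/(1-α^2)).toNNReal ≠ 0 := toNNReal_ne_zero hV
    have hd1 : ((gaussianReal x 0) {x}).toReal = 1 := by
      rw [gaussianReal_zero_var]
      simp [Measure.dirac_apply_of_mem (mem_singleton x)]
    have hd2 : ((gaussianReal 0 ((σ^2/(1-α^2)).toNNReal)) {x}).toReal = 0 := by
      rw [(gaussianReal_absolutelyContinuous 0 hvne) (Real.volume_singleton)]
      simp
    constructor
    · have hge := le_dTV (μ := gaussianReal x 0)
        (ν := gaussianReal 0 ((σ^2/(1-α^2)).toNNReal)) (A := {x}) (measurableSet_singleton x)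
      rw [hd1, hd2, show |(1:ℝ) - 0| = 1 by norm_num] at hge
      linarith
    · have := dTV_le_one (μ := gaussianReal x 0)
        (ν := gaussianReal 0 ((σ^2/(1-α^2)).toNNReal))
      linarith
  · -- j ≥ 1
    have hjne : 2*j ≠ 0 := by omega
    have ht0 : (0:ℝ) < α^(2*j) := pow_pos hα0 _
    have ht1 : α^(2*j) < 1 := pow_lt_one₀ hα0.le hα1 hjne
    have hvar : σ^2 * (1 - α^(2*j)) / (1-α^2) = (σ^2/(1-α^2)) * (1 - α^(2*j)) := by
      field_simp
    have hsV : Real.sqrt (σ^2/(1-α^2)) = σ / Real.sqrt (1-α^2) := by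
      rw [Real.sqrt_div (sq_nonneg σ), Real.sqrt_sq hσ.le]
    have hδeq : |x| * α^j * Real.sqrt (1-α^2) / σ = |α^j * x| / Real.sqrt (σ^2/(1-α^2)) := by
      rw [hsV, abs_mul, abs_of_pos (pow_pos hα0 j)]
      rw [div_div_eq_mul_div]
      ring
    rw [hvar, hδeq]
    constructor
    · rcases le_or_gt 0 (α^j * x) with hm | hm
      · have h := lower_master (m := α^j * x) hV ht0 ht1 hm
        rwa [abs_of_nonneg hm]
      · rw [dTV_gauss_neg]
        have h := lower_master (m := -(α^j * x)) hV ht0 ht1 (by linarith)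
        rwa [abs_of_neg hm]
    · exact upper_master hV ht0 ht1.le
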